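/- If a projected fiber contains a hole of type i, then the functional l_{3−i} strictly separates the hole from the semigroup elements of that fiber: for every λ : X₀ → ℕ and every v ∈ S with π(v) = π(h₁ + Σ_{x∈X₀} λ(x)•A(x)), one has l₂(v) > 0 while l₂(h₁ + Σ_{x∈X₀} λ(x)•A(x)) = 0; and for every μ : X₁ → ℕ and every v ∈ S with π(v) = π(h₂ + Σ_{x∈X₁} μ(x)•A(x)), one has l₁(v) > 0 while l₁(h₂ + Σ_{x∈X₁} μ(x)•A(x)) = 0. -/

import Mathlib

/-- A state of the graph `K̃₄` is a quadruple `(x₁,x₂,x₃,x₄) ∈ {0,1}⁴`,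
encoded as a function `Fin 4 → Fin 2` (index `i` is vertex `i+1`). -/
abbrev K4State := Fin 4 → Fin 2

/-- The index set `I = {0,1}³ ⊕ ({1,2,3} × {0,1}²)`: triangle coordinates and
edge coordinates. -/
abbrev K4Index := (Fin 2 × Fin 2 × Fin 2) ⊕ (Fin 3 × Fin 2 × Fin 2)

/-- The marginal map of `K̃₄`: `A x` has entry 1 at the triangle coordinate
`(x₁,x₂,x₃)`, entry 1 at the edge coordinate `(i,(x_i,x₄))` for `i ∈ {1,2,3}`,
and entry 0 elsewhere. -/
def A (x : K4State) : K4Index → ℤ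
  | Sum.inl (a, b, c) => if x 0 = a ∧ x 1 = b ∧ x 2 = c then 1 else 0
  | Sum.inr (i, a, b) => if x i.castSucc = a ∧ x 3 = b then 1 else 0

/-- The additive submonoid `S` of `ℤ^I` generated by the 16 vectors `A x`. -/
def S : AddSubmonoid (K4Index → ℤ) := AddSubmonoid.closure (Set.range A)

/-- The fundamental hole `h₁`: triangle coordinate `(a,b,c)` equal to 1 iff
`a ⊕ b ⊕ c = 0`, all twelve edge coordinates equal to 1. -/
def h₁ : K4Index → ℤ
  | Sum.inl (a, b, c) => if a + b + c = 0 then 1 else 0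
  | Sum.inr _ => 1

/-- The fundamental hole `h₂`: triangle coordinate `(a,b,c)` equal to 1 iff
`a ⊕ b ⊕ c = 1`, all twelve edge coordinates equal to 1. -/
def h₂ : K4Index → ℤ
  | Sum.inl (a, b, c) => if a + b + c = 1 then 1 else 0
  | Sum.inr _ => 1

/-- The set `X₀` of states with `x₁ ⊕ x₂ ⊕ x₃ = 0` (XOR). -/
abbrev X₀ := {x : K4State // x 0 + x 1 + x 2 = 0}

/-- The set `X₁` of states with `x₁ ⊕ x₂ ⊕ x₃ = 1` (opposite of XOR). -/
abbrev X₁ := {x : K4State // x 0 + x 1 + x 2 = 1}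

/-- The projection `π : ℤ^I → ℤ^({1,2,3} × {0,1}²)` forgetting the eight
triangle coordinates (the three-star marginal). -/
def pr (v : K4Index → ℤ) : Fin 3 × Fin 2 × Fin 2 → ℤ := fun j => v (Sum.inr j)

/-- The linear functional `l₁`: sum of the triangle coordinates over the
triples with `a ⊕ b ⊕ c = 0`. -/
def l₁ (y : K4Index → ℤ) : ℤ :=
  ∑ t : Fin 2 × Fin 2 × Fin 2, if t.1 + t.2.1 + t.2.2 = 0 then y (Sum.inl t) else 0

/-- The linear functional `l₂`: sum of the triangle coordinates over the
triples with `a ⊕ b ⊕ c = 1`. -/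
def l₂ (y : K4Index → ℤ) : ℤ :=
  ∑ t : Fin 2 × Fin 2 × Fin 2, if t.1 + t.2.1 + t.2.2 = 1 then y (Sum.inl t) else 0


/-- `l₁` as an additive monoid hom. -/
def L1 : (K4Index → ℤ) →+ ℤ where
  toFun := l₁
  map_zero' := by simp [l₁]
  map_add' v w := by
    unfold l₁
    have h : ∀ t : Fin 2 × Fin 2 × Fin 2,
        (if t.1 + t.2.1 + t.2.2 = 0 then (v + w) (Sum.inl t) else 0) =
        (if t.1 + t.2.1 + t.2.2 = 0 then v (Sum.inl t) else 0) +
        (if t.1 + t.2.1 + t.2.2 = 0 then w (Sum.inl t) else 0) := fun t => by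
      split <;> simp
    simp only [h]
    exact Finset.sum_add_distrib

/-- `l₂` as an additive monoid hom. -/
def L2 : (K4Index → ℤ) →+ ℤ where
  toFun := l₂
  map_zero' := by simp [l₂]
  map_add' v w := by
    unfold l₂
    have h : ∀ t : Fin 2 × Fin 2 × Fin 2,
        (if t.1 + t.2.1 + t.2.2 = 1 then (v + w) (Sum.inl t) else 0) =
        (if t.1 + t.2.1 + t.2.2 = 1 then v (Sum.inl t) else 0) +
        (if t.1 + t.2.1 + t.2.2 = 1 then w (Sum.inl t) else 0) := fun t => by
      split <;> simp
    simp only [h]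
    exact Finset.sum_add_distrib

/-- Parity certificate for type-1 holes: sum of the edge coordinates `(i,(1,0))`. -/
def HH1 : (K4Index → ℤ) →+ ℤ where
  toFun y := y (Sum.inr (0,1,0)) + y (Sum.inr (1,1,0)) + y (Sum.inr (2,1,0))
  map_zero' := by simp
  map_add' v w := by simp only [Pi.add_apply]; ring

/-- Parity certificate for type-2 holes. -/
def HH2 : (K4Index → ℤ) →+ ℤ where
  toFun y := y (Sum.inr (0,1,0)) + y (Sum.inr (1,1,0)) + y (Sum.inr (2,1,0)) +
    y (Sum.inr (0,0,0)) + y (Sum.inr (0,1,0))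
  map_zero' := by simp
  map_add' v w := by simp only [Pi.add_apply]; ring

lemma gen1 : ∀ x : K4State, 0 ≤ L2 (A x) ∧ (L2 (A x) = 0 → HH1 (A x) % 2 = 0) := by decide

lemma gen2 : ∀ x : K4State, 0 ≤ L1 (A x) ∧ (L1 (A x) = 0 → HH2 (A x) % 2 = 0) := by decide

lemma genX0 : ∀ x : K4State, x 0 + x 1 + x 2 = 0 → L2 (A x) = 0 ∧ HH1 (A x) % 2 = 0 := by
  decide

lemma genX1 : ∀ x : K4State, x 0 + x 1 + x 2 = 1 → L1 (A x) = 0 ∧ HH2 (A x) % 2 = 0 := by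
  decide

lemma h1facts : L2 h₁ = 0 ∧ HH1 h₁ % 2 = 1 := by decide

lemma h2facts : L1 h₂ = 0 ∧ HH2 h₂ % 2 = 1 := by decide

lemma S_inv1 : ∀ v ∈ S, 0 ≤ L2 v ∧ (L2 v = 0 → HH1 v % 2 = 0) := by
  intro v hv
  induction hv using AddSubmonoid.closure_induction with
  | mem y hy => obtain ⟨x, rfl⟩ := hy; exact gen1 x
  | zero => simp
  | add a b _ _ ha hb =>
    refine ⟨by rw [map_add]; exact add_nonneg ha.1 hb.1, fun h0 => ?_⟩
    rw [map_add] at h0 ⊢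
    have h1 : L2 a = 0 := le_antisymm (by linarith [hb.1]) ha.1
    have h2 : L2 b = 0 := by linarith
    have := ha.2 h1
    have := hb.2 h2
    omega

lemma S_inv2 : ∀ v ∈ S, 0 ≤ L1 v ∧ (L1 v = 0 → HH2 v % 2 = 0) := by
  intro v hv
  induction hv using AddSubmonoid.closure_induction with
  | mem y hy => obtain ⟨x, rfl⟩ := hy; exact gen2 x
  | zero => simp
  | add a b _ _ ha hb =>
    refine ⟨by rw [map_add]; exact add_nonneg ha.1 hb.1, fun h0 => ?_⟩
    rw [map_add] at h0 ⊢
    have h1 : L1 a = 0 := le_antisymm (by linarith [hb.1]) ha.1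
    have h2 : L1 b = 0 := by linarith
    have := ha.2 h1
    have := hb.2 h2
    omega

/-- If a projected fiber contains a hole of type `i`, then `l_{3-i}` strictly
separates the hole from the semigroup elements of that fiber. -/
theorem l_functionals_separate_holes :
    (∀ l : X₀ → ℕ, ∀ v ∈ S,
      pr v = pr (h₁ + ∑ x : X₀, (l x : ℤ) • A x.val) →
        0 < l₂ v ∧ l₂ (h₁ + ∑ x : X₀, (l x : ℤ) • A x.val) = 0) ∧
    (∀ m : X₁ → ℕ, ∀ v ∈ S,
      pr v = pr (h₂ + ∑ x : X₁, (m x : ℤ) • A x.val) →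
        0 < l₁ v ∧ l₁ (h₂ + ∑ x : X₁, (m x : ℤ) • A x.val) = 0) := by
  constructor
  · intro l v hv hpr
    set w := h₁ + ∑ x : X₀, (l x : ℤ) • A x.val with hw
    have hwL2 : L2 w = 0 := by
      rw [hw, map_add, map_sum, h1facts.1]
      rw [Finset.sum_eq_zero fun x _ => ?_]
      · ring
      · rw [map_zsmul, (genX0 x.val x.prop).1, smul_zero]
    have hwHH : HH1 w % 2 = 1 := by
      have hsum : HH1 (∑ x : X₀, (l x : ℤ) • A x.val) % 2 = 0 := by
        rw [map_sum]
        have : (2 : ℤ) ∣ ∑ x : X₀, HH1 ((l x : ℤ) • A x.val) := by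
          refine Finset.dvd_sum fun x _ => ?_
          rw [map_zsmul, smul_eq_mul]
          exact Dvd.dvd.mul_left (Int.dvd_of_emod_eq_zero (genX0 x.val x.prop).2) _
        omega
      have h1 := h1facts.2
      rw [hw, map_add]
      omega
    have hvHH : HH1 v = HH1 w := by
      have e0 : v (Sum.inr (0,1,0)) = w (Sum.inr (0,1,0)) := congrFun hpr (0,1,0)
      have e1 : v (Sum.inr (1,1,0)) = w (Sum.inr (1,1,0)) := congrFun hpr (1,1,0)
      have e2 : v (Sum.inr (2,1,0)) = w (Sum.inr (2,1,0)) := congrFun hpr (2,1,0)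
      show v (Sum.inr (0,1,0)) + v (Sum.inr (1,1,0)) + v (Sum.inr (2,1,0)) =
        w (Sum.inr (0,1,0)) + w (Sum.inr (1,1,0)) + w (Sum.inr (2,1,0))
      rw [e0, e1, e2]
    obtain ⟨hle, himp⟩ := S_inv1 v hv
    have hne : L2 v ≠ 0 := fun h0 => by
      have := himp h0
      rw [hvHH] at this
      omega
    exact ⟨lt_of_le_of_ne hle (Ne.symm hne), hwL2⟩
  · intro m v hv hpr
    set w := h₂ + ∑ x : X₁, (m x : ℤ) • A x.val with hw
    have hwL1 : L1 w = 0 := by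
      rw [hw, map_add, map_sum, h2facts.1]
      rw [Finset.sum_eq_zero fun x _ => ?_]
      · ring
      · rw [map_zsmul, (genX1 x.val x.prop).1, smul_zero]
    have hwHH : HH2 w % 2 = 1 := by
      have hsum : HH2 (∑ x : X₁, (m x : ℤ) • A x.val) % 2 = 0 := by
        rw [map_sum]
        have : (2 : ℤ) ∣ ∑ x : X₁, HH2 ((m x : ℤ) • A x.val) := by
          refine Finset.dvd_sum fun x _ => ?_
          rw [map_zsmul, smul_eq_mul]
          exact Dvd.dvd.mul_left (Int.dvd_of_emod_eq_zero (genX1 x.val x.prop).2) _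
        omega
      have h2 := h2facts.2
      rw [hw, map_add]
      omega
    have hvHH : HH2 v = HH2 w := by
      have e0 : v (Sum.inr (0,1,0)) = w (Sum.inr (0,1,0)) := congrFun hpr (0,1,0)
      have e1 : v (Sum.inr (1,1,0)) = w (Sum.inr (1,1,0)) := congrFun hpr (1,1,0)
      have e2 : v (Sum.inr (2,1,0)) = w (Sum.inr (2,1,0)) := congrFun hpr (2,1,0)
      have e3 : v (Sum.inr (0,0,0)) = w (Sum.inr (0,0,0)) := congrFun hpr (0,0,0)
      show v (Sum.inr (0,1,0)) + v (Sum.inr (1,1,0)) + v (Sum.inr (2,1,0)) +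
          v (Sum.inr (0,0,0)) + v (Sum.inr (0,1,0)) =
        w (Sum.inr (0,1,0)) + w (Sum.inr (1,1,0)) + w (Sum.inr (2,1,0)) +
          w (Sum.inr (0,0,0)) + w (Sum.inr (0,1,0))
      rw [e0, e1, e2, e3]
    obtain ⟨hle, himp⟩ := S_inv2 v hv
    have hne : L1 v ≠ 0 := fun h0 => by
      have := himp h0
      rw [hvHH] at this
      omega
    exact ⟨lt_of_le_of_ne hle (Ne.symm hne), hwL1⟩
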